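/- Let ε > 0 and define Â_ε = (εI + D)^{−1} A. Then εI + L is invertible, I − Â_ε is invertible, the Neumann series ∑_{t=0}^{∞} Â_ε^t converges to (I − Â_ε)^{−1}, and (εI + L)^{−1} = (∑_{t=0}^{∞} Â_ε^t)(εI + D)^{−1}. -/

import Mathlib

open Matrix Filter

/-- The weighted degree matrix of `A`. -/
noncomputable def degMat {n : ℕ} (A : Matrix (Fin n) (Fin n) ℝ) :
    Matrix (Fin n) (Fin n) ℝ :=
  Matrix.diagonal (fun k => ∑ l, A k l)

/-- The graph Laplacian `L = D - A`. -/
noncomputable def lap {n : ℕ} (A : Matrix (Fin n) (Fin n) ℝ) :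
    Matrix (Fin n) (Fin n) ℝ :=
  degMat A - A

/-- for `ε > 0` and `Â_ε = (εI + D)⁻¹ A`, the matrices `εI + L` and
`I − Â_ε` are invertible, the Neumann series `∑_{t=0}^{∞} Â_ε^t` converges to
`(I − Â_ε)⁻¹`, and `(εI + L)⁻¹ = (∑_{t=0}^{∞} Â_ε^t)(εI + D)⁻¹`. -/
theorem stmt_12 (n : ℕ)
    (A : Matrix (Fin n) (Fin n) ℝ)
    (hsymm : ∀ k l, A k l = A l k)
    (hnonneg : ∀ k l, 0 ≤ A k l)
    (hdiag : ∀ k, A k k = 0)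
    (ε : ℝ) (hε : 0 < ε)
    (Ahat : Matrix (Fin n) (Fin n) ℝ)
    (hAhat : Ahat = (ε • (1 : Matrix (Fin n) (Fin n) ℝ) + degMat A)⁻¹ * A) :
    IsUnit (ε • (1 : Matrix (Fin n) (Fin n) ℝ) + lap A) ∧
    IsUnit ((1 : Matrix (Fin n) (Fin n) ℝ) - Ahat) ∧
    Tendsto (fun N : ℕ => ∑ t ∈ Finset.range (N + 1), Ahat ^ t) atTop
      (nhds ((1 : Matrix (Fin n) (Fin n) ℝ) - Ahat)⁻¹) ∧
    (ε • (1 : Matrix (Fin n) (Fin n) ℝ) + lap A)⁻¹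
      = ((1 : Matrix (Fin n) (Fin n) ℝ) - Ahat)⁻¹
        * (ε • (1 : Matrix (Fin n) (Fin n) ℝ) + degMat A)⁻¹ := by
  letI := Matrix.linftyOpNormedRing (α := ℝ) (n := Fin n)
  letI := Matrix.linftyOpNormedAlgebra (R := ℝ) (α := ℝ) (n := Fin n)
  haveI : CompleteSpace (Matrix (Fin n) (Fin n) ℝ) := FiniteDimensional.complete ℝ _
  set d : Fin n → ℝ := fun k => ε + ∑ l, A k l with hd
  have hdpos : ∀ k, 0 < d k := fun k =>
    add_pos_of_pos_of_nonneg hε (Finset.sum_nonneg fun l _ => hnonneg k l)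
  have hM : ε • (1 : Matrix (Fin n) (Fin n) ℝ) + degMat A = diagonal d := by
    ext k l
    by_cases h : k = l <;>
      simp [degMat, Matrix.diagonal_apply, Matrix.one_apply, h, hd]
  have hMdet : (ε • (1 : Matrix (Fin n) (Fin n) ℝ) + degMat A).det ≠ 0 := by
    rw [hM, Matrix.det_diagonal]
    exact Finset.prod_ne_zero_iff.2 fun k _ => (hdpos k).ne'
  have hMunit : IsUnit (ε • (1 : Matrix (Fin n) (Fin n) ℝ) + degMat A) :=
    (Matrix.isUnit_iff_isUnit_det _).2 (isUnit_iff_ne_zero.2 hMdet)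
  have hMinv : (ε • (1 : Matrix (Fin n) (Fin n) ℝ) + degMat A)⁻¹
      = diagonal (fun k => (d k)⁻¹) := by
    rw [hM]
    apply Matrix.inv_eq_right_inv
    rw [Matrix.diagonal_mul_diagonal]
    ext k l
    by_cases h : k = l <;>
      simp [Matrix.diagonal_apply, Matrix.one_apply, h, mul_inv_cancel₀ (hdpos l).ne']
  have hAhat' : ∀ k l, Ahat k l = (d k)⁻¹ * A k l := by
    intro k l
    rw [hAhat, hMinv, Matrix.diagonal_mul]
  -- norm bound
  have hnorm : ‖Ahat‖ < 1 := by
    rw [Matrix.linfty_opNorm_def]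
    rw [show ((1 : ℝ)) = ((1 : NNReal) : ℝ) by norm_num, NNReal.coe_lt_coe]
    refine Finset.sup_lt_iff (by norm_num) |>.2 fun k _ => ?_
    have hrow : ((∑ l, ‖Ahat k l‖₊ : NNReal) : ℝ) = (d k)⁻¹ * ∑ l, A k l := by
      push_cast
      rw [Finset.mul_sum]
      refine Finset.sum_congr rfl fun l _ => ?_
      rw [hAhat' k l, Real.norm_eq_abs,
        abs_of_nonneg (mul_nonneg (inv_nonneg.2 (hdpos k).le) (hnonneg k l))]
    rw [← NNReal.coe_lt_coe, hrow, NNReal.coe_one]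
    rw [inv_mul_lt_iff₀ (hdpos k), mul_one]
    show (∑ l, A k l) < ε + ∑ l, A k l
    linarith
  -- geometric series
  have hsummable : Summable (fun t : ℕ => Ahat ^ t) :=
    summable_geometric_of_norm_lt_one hnorm
  have hmul : ((1 : Matrix (Fin n) (Fin n) ℝ) - Ahat) * ∑' t : ℕ, Ahat ^ t = 1 :=
    mul_neg_geom_series Ahat hnorm
  have hunit1 : IsUnit ((1 : Matrix (Fin n) (Fin n) ℝ) - Ahat) :=
    (Matrix.isUnit_iff_isUnit_det _).2 (Matrix.isUnit_det_of_right_inverse hmul)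
  have hinv1 : ((1 : Matrix (Fin n) (Fin n) ℝ) - Ahat)⁻¹ = ∑' t : ℕ, Ahat ^ t :=
    Matrix.inv_eq_right_inv hmul
  -- factorization
  have hfact : ε • (1 : Matrix (Fin n) (Fin n) ℝ) + lap A
      = (ε • (1 : Matrix (Fin n) (Fin n) ℝ) + degMat A) * (1 - Ahat) := by
    rw [mul_sub, mul_one, hAhat, ← Matrix.mul_assoc,
      Matrix.mul_nonsing_inv _ ((Matrix.isUnit_iff_isUnit_det _).1 hMunit), Matrix.one_mul]
    rw [lap]; abel
  refine ⟨?_, hunit1, ?_, ?_⟩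
  · rw [hfact]; exact hMunit.mul hunit1
  · rw [hinv1]
    exact hsummable.hasSum.tendsto_sum_nat.comp (tendsto_add_atTop_nat 1)
  · rw [hfact, Matrix.mul_inv_rev]
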